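/- Regret-to-estimation conversion under strong convexity: let Φ : ℝ^S → ℝ be differentiable with gradient map g and α-strongly convex, i.e. Φ(v) ≥ Φ(u) + ⟨g(u), v − u⟩ + (α/2)‖v − u‖₂² for all u, v ∈ ℝ^S, with α > 0. For x ∈ ℝ^d and y ∈ ℝ^S define the loss l(W; x, y) = Φ(Wx) − yᵀWx on ℝ^{S×d}. Given x₁,…,x_t ∈ ℝ^d, y₁,…,y_t ∈ ℝ^S, matrices W₁,…,W_t, W* ∈ ℝ^{S×d}, and B ∈ ℝ such that Σ_{i=1}^t [l(W_i; x_i, y_i) − l(W*; x_i, y_i)] ≤ B, it holds that Σ_{i=1}^t ‖W*x_i − W_i x_i‖₂² ≤ (2/α)·B + (2/α)·Σ_{i=1}^t (g(W*x_i) − y_i)ᵀ(W*x_i − W_i x_i). -/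

import Mathlib

open Matrix

noncomputable def glmLoss {S d : ℕ} (Φ : (Fin S → ℝ) → ℝ)
    (W : Matrix (Fin S) (Fin d) ℝ) (x : Fin d → ℝ) (y : Fin S → ℝ) : ℝ :=
  Φ (W.mulVec x) - y ⬝ᵥ W.mulVec x

theorem regret_to_estimation_error
    (S d : ℕ) (α : ℝ) (hα : 0 < α)
    (Φ : (Fin S → ℝ) → ℝ) (g : (Fin S → ℝ) → (Fin S → ℝ))
    (hstrong : ∀ u v : Fin S → ℝ,
      Φ u + (∑ i, g u i * (v i - u i)) + (α / 2) * ∑ i, (v i - u i) ^ 2 ≤ Φ v)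
    (t : ℕ) (x : ℕ → Fin d → ℝ) (y : ℕ → Fin S → ℝ)
    (W : ℕ → Matrix (Fin S) (Fin d) ℝ) (Wstar : Matrix (Fin S) (Fin d) ℝ) (B : ℝ)
    (hreg : ∑ i ∈ Finset.range t,
        (glmLoss Φ (W i) (x i) (y i) - glmLoss Φ Wstar (x i) (y i)) ≤ B) :
    ∑ i ∈ Finset.range t, ∑ j, ((Wstar.mulVec (x i) - (W i).mulVec (x i)) j) ^ 2
      ≤ (2 / α) * B
        + (2 / α) * ∑ i ∈ Finset.range t,
            ((g (Wstar.mulVec (x i)) - y i) ⬝ᵥ (Wstar.mulVec (x i) - (W i).mulVec (x i))) := by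
  have key : ∀ i, (α/2) * ∑ j, ((Wstar.mulVec (x i) - (W i).mulVec (x i)) j) ^ 2
      ≤ (glmLoss Φ (W i) (x i) (y i) - glmLoss Φ Wstar (x i) (y i))
        + ((g (Wstar.mulVec (x i)) - y i) ⬝ᵥ (Wstar.mulVec (x i) - (W i).mulVec (x i))) := by
    intro i
    set u := Wstar.mulVec (x i) with hu
    set v := (W i).mulVec (x i) with hv
    have h := hstrong u v
    simp only [glmLoss, dotProduct, Pi.sub_apply, ← hu, ← hv]
    have e1 : ∑ j, (v j - u j) ^ 2 = ∑ j, (u j - v j) ^ 2 :=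
      Finset.sum_congr rfl (fun j _ => by ring)
    have e2 : ∑ j, g u j * (v j - u j)
        = (∑ j, y i j * v j) - (∑ j, y i j * u j)
          - ∑ j, (g u j - y i j) * (u j - v j) := by
      rw [← Finset.sum_sub_distrib, ← Finset.sum_sub_distrib]
      exact Finset.sum_congr rfl (fun j _ => by ring)
    rw [e1, e2] at h
    linarith
  have hsum := Finset.sum_le_sum (fun i (_ : i ∈ Finset.range t) => key i)
  rw [← Finset.mul_sum, Finset.sum_add_distrib] at hsum
  have hB := add_le_add hreg (le_refl (∑ i ∈ Finset.range t,
      ((g (Wstar.mulVec (x i)) - y i) ⬝ᵥ (Wstar.mulVec (x i) - (W i).mulVec (x i)))))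
  have h2 : (α/2) * ∑ i ∈ Finset.range t, ∑ j,
      ((Wstar.mulVec (x i) - (W i).mulVec (x i)) j) ^ 2
      ≤ B + ∑ i ∈ Finset.range t,
        ((g (Wstar.mulVec (x i)) - y i) ⬝ᵥ (Wstar.mulVec (x i) - (W i).mulVec (x i))) :=
    le_trans hsum hB
  have hpos : (0:ℝ) < 2/α := by positivity
  have := mul_le_mul_of_nonneg_left h2 hpos.le
  have heq : (2/α) * ((α/2) * ∑ i ∈ Finset.range t, ∑ j,
      ((Wstar.mulVec (x i) - (W i).mulVec (x i)) j) ^ 2)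
      = ∑ i ∈ Finset.range t, ∑ j, ((Wstar.mulVec (x i) - (W i).mulVec (x i)) j) ^ 2 := by
    field_simp
  rw [heq, mul_add] at this
  exact this
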